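/- arXiv:2203.08585 — 4 statements merged into one kernel-verified Lean document; each statement's English description precedes it below -/
import Mathlib

section
/- For every real number r ≥ 0 and every α with 0 ≤ α ≤ 1, one has cosh r − 1 ≤ r^{2α} · cosh r, where r^{2α} denotes the real power. In particular (the case α = 1, valid for all real r), cosh r − 1 ≤ r² · cosh r. -/
open Real

lemma aux_mono {f : ℝ → ℝ} (hf : Differentiable ℝ f)
    (hf' : ∀ x, 0 ≤ x → 0 ≤ deriv f x) : MonotoneOn f (Set.Ici 0) := by
  apply monotoneOn_of_deriv_nonneg (convex_Ici 0) hf.continuous.continuousOn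
    (hf.differentiableOn)
  intro x hx
  exact hf' x (le_of_lt (by simpa using hx))

lemma sinh_le_mul_cosh {r : ℝ} (hr : 0 ≤ r) : Real.sinh r ≤ r * Real.cosh r := by
  have h : MonotoneOn (fun x => x * Real.cosh x - Real.sinh x) (Set.Ici 0) := by
    apply aux_mono
    · exact (differentiable_id.mul Real.differentiable_cosh).sub Real.differentiable_sinh
    · intro x hx
      have : deriv (fun x => x * Real.cosh x - Real.sinh x) x = x * Real.sinh x := by
        rw [deriv_fun_sub ((differentiableAt_fun_id.fun_mul (Real.differentiable_cosh x)))
          (Real.differentiable_sinh x), deriv_fun_mul differentiableAt_fun_id (Real.differentiable_cosh x)]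
        simp [Real.deriv_sinh, Real.deriv_cosh]
      rw [this]
      exact mul_nonneg hx (Real.sinh_nonneg_iff.mpr hx)
  have := h (Set.self_mem_Ici) (Set.mem_Ici.mpr hr) hr
  simpa using this

lemma cosh_sub_one_le_mul_sinh {r : ℝ} (hr : 0 ≤ r) :
    Real.cosh r - 1 ≤ r * Real.sinh r := by
  have h : MonotoneOn (fun x => x * Real.sinh x - Real.cosh x) (Set.Ici 0) := by
    apply aux_mono
    · exact (differentiable_id.mul Real.differentiable_sinh).sub Real.differentiable_cosh
    · intro x hx
      have : deriv (fun x => x * Real.sinh x - Real.cosh x) x = x * Real.cosh x := by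
        rw [deriv_fun_sub ((differentiableAt_fun_id.fun_mul (Real.differentiable_sinh x)))
          (Real.differentiable_cosh x), deriv_fun_mul differentiableAt_fun_id (Real.differentiable_sinh x)]
        simp [Real.deriv_sinh, Real.deriv_cosh]
      rw [this]
      exact mul_nonneg hx (le_trans zero_le_one (Real.one_le_cosh x))
  have := h (Set.self_mem_Ici) (Set.mem_Ici.mpr hr) hr
  simp only [Real.sinh_zero, Real.cosh_zero, mul_zero, zero_mul] at this
  linarith

lemma cosh_sub_one_le_sq_mul_cosh (r : ℝ) :
    Real.cosh r - 1 ≤ r ^ 2 * Real.cosh r := by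
  wlog hr : 0 ≤ r with H
  · have := H (-r) (by linarith [le_of_not_ge hr])
    simpa using this
  calc Real.cosh r - 1 ≤ r * Real.sinh r := cosh_sub_one_le_mul_sinh hr
    _ ≤ r * (r * Real.cosh r) := by
        exact mul_le_mul_of_nonneg_left (sinh_le_mul_cosh hr) hr
    _ = r ^ 2 * Real.cosh r := by ring

/-- For every real `r ≥ 0` and every `α` with `0 ≤ α ≤ 1`, one has
`cosh r − 1 ≤ r ^ (2α) * cosh r` (real power); in particular (the case `α = 1`,
valid for all real `r`), `cosh r − 1 ≤ r ^ 2 * cosh r`. -/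
theorem cosh_sub_one_le_rpow_mul_cosh :
    (∀ r α : ℝ, 0 ≤ r → 0 ≤ α → α ≤ 1 →
      Real.cosh r - 1 ≤ r ^ (2 * α) * Real.cosh r) ∧
    (∀ r : ℝ, Real.cosh r - 1 ≤ r ^ 2 * Real.cosh r) := by
  refine ⟨?_, cosh_sub_one_le_sq_mul_cosh⟩
  intro r α hr hα hα1
  rcases eq_or_lt_of_le hr with h0 | h0
  · rw [← h0]
    simp only [Real.cosh_zero, mul_one, sub_self]
    exact Real.rpow_nonneg le_rfl _
  rcases le_or_gt 1 r with h1 | h1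
  · have : (1:ℝ) ≤ r ^ (2 * α) := Real.one_le_rpow h1 (by linarith)
    nlinarith [Real.one_le_cosh r]
  · have h2 : r ^ (2:ℝ) ≤ r ^ (2 * α) :=
      Real.rpow_le_rpow_of_exponent_ge h0 (le_of_lt h1) (by linarith)
    have h3 : r ^ (2:ℝ) = r ^ 2 := by
      rw [Real.rpow_two]
    have := cosh_sub_one_le_sq_mul_cosh r
    have h4 : r ^ 2 * Real.cosh r ≤ r ^ (2 * α) * Real.cosh r := by
      rw [← h3]; exact mul_le_mul_of_nonneg_right h2 (by positivity)
    linarith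
end

section
/- For all real numbers a and b, |cosh b − cosh a| ≤ (1/2) · |b² − a²| · (cosh b + cosh a). -/
open Real

/-- `sinh x ≤ x * cosh x` for `x ≥ 0`. -/
lemma sinh_le_mul_cosh_aux {x : ℝ} (hx : 0 ≤ x) : Real.sinh x ≤ x * Real.cosh x := by
  have hder : ∀ t : ℝ, HasDerivAt (fun t : ℝ => t * Real.cosh t - Real.sinh t)
      (1 * Real.cosh t + t * Real.sinh t - Real.cosh t) t := fun t =>
    ((hasDerivAt_id t).mul (Real.hasDerivAt_cosh t)).sub (Real.hasDerivAt_sinh t)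
  have h : MonotoneOn (fun t : ℝ => t * Real.cosh t - Real.sinh t) (Set.Ici 0) := by
    apply monotoneOn_of_deriv_nonneg (convex_Ici 0)
    · exact (((continuous_id.mul Real.continuous_cosh).sub Real.continuous_sinh)).continuousOn
    · intro t _
      exact (hder t).differentiableAt.differentiableWithinAt
    · intro t ht
      rw [(hder t).deriv]
      have ht' : 0 < t := by simpa using ht
      have : 0 ≤ t * Real.sinh t :=
        mul_nonneg ht'.le (Real.sinh_nonneg_iff.mpr ht'.le)
      linarith
  have := h (Set.self_mem_Ici) (Set.mem_Ici.mpr hx) hx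
  simpa using this

/-- Key case: `0 ≤ a ≤ b`. -/
lemma cosh_sub_cosh_le_aux {a b : ℝ} (ha : 0 ≤ a) (hab : a ≤ b) :
    Real.cosh b - Real.cosh a ≤ (1 / 2) * (b ^ 2 - a ^ 2) * (Real.cosh b + Real.cosh a) := by
  have hb : 0 ≤ b := ha.trans hab
  set u := (b + a) / 2 with hu
  set v := (b - a) / 2 with hv
  have hu0 : 0 ≤ u := by positivity
  have hv0 : 0 ≤ v := by simp [hv]; linarith
  have hid : Real.cosh b - Real.cosh a = 2 * Real.sinh u * Real.sinh v := by
    have hb' : b = u + v := by rw [hu, hv]; ring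
    have ha' : a = u - v := by rw [hu, hv]; ring
    rw [hb', ha', Real.cosh_add, Real.cosh_sub]; ring
  have h1 : Real.sinh u ≤ u * Real.cosh u := sinh_le_mul_cosh_aux hu0
  have h2 : Real.sinh v ≤ v * Real.cosh v := sinh_le_mul_cosh_aux hv0
  have hsu : 0 ≤ Real.sinh u := Real.sinh_nonneg_iff.mpr hu0
  have hsv : 0 ≤ Real.sinh v := Real.sinh_nonneg_iff.mpr hv0
  have hcu : 0 < Real.cosh u := Real.cosh_pos _
  have hcv : 0 < Real.cosh v := Real.cosh_pos _
  have step : 2 * Real.sinh u * Real.sinh v ≤ 2 * (u * Real.cosh u) * (v * Real.cosh v) := by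
    have := mul_le_mul h1 h2 hsv (by positivity)
    nlinarith
  have hcc : Real.cosh u * Real.cosh v = (Real.cosh b + Real.cosh a) / 2 := by
    have hb' : b = u + v := by rw [hu, hv]; ring
    have ha' : a = u - v := by rw [hu, hv]; ring
    rw [hb', ha', Real.cosh_add, Real.cosh_sub]; ring
  have huv : u * v = (b ^ 2 - a ^ 2) / 4 := by rw [hu, hv]; ring
  have hca : 0 < Real.cosh a := Real.cosh_pos _
  have hsq : 0 ≤ b ^ 2 - a ^ 2 := by nlinarith
  calc Real.cosh b - Real.cosh a = 2 * Real.sinh u * Real.sinh v := hid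
    _ ≤ 2 * (u * Real.cosh u) * (v * Real.cosh v) := step
    _ = 2 * (u * v) * (Real.cosh u * Real.cosh v) := by ring
    _ = (1 / 4) * (b ^ 2 - a ^ 2) * (Real.cosh b + Real.cosh a) := by
        rw [huv, hcc]; ring
    _ ≤ (1 / 2) * (b ^ 2 - a ^ 2) * (Real.cosh b + Real.cosh a) := by
        nlinarith [mul_nonneg hsq (by positivity : (0:ℝ) ≤ Real.cosh b + Real.cosh a)]

/-- Case `0 ≤ a ≤ b`, with abs. -/
lemma abs_aux {a b : ℝ} (ha : 0 ≤ a) (hab : a ≤ b) :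
    |Real.cosh b - Real.cosh a| ≤ (1 / 2) * |b ^ 2 - a ^ 2| * (Real.cosh b + Real.cosh a) := by
  have hmono : Real.cosh a ≤ Real.cosh b := by
    rw [Real.cosh_le_cosh, abs_of_nonneg ha, abs_of_nonneg (ha.trans hab)]
    exact hab
  have hsq : 0 ≤ b ^ 2 - a ^ 2 := by nlinarith
  rw [abs_of_nonneg (by linarith), abs_of_nonneg hsq]
  exact cosh_sub_cosh_le_aux ha hab

/-- For all real `a`, `b`:  `|cosh b − cosh a| ≤ (1/2) * |b² − a²| * (cosh b + cosh a)`. -/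
theorem abs_cosh_sub_cosh_le (a b : ℝ) :
    |Real.cosh b - Real.cosh a| ≤ (1 / 2) * |b ^ 2 - a ^ 2| * (Real.cosh b + Real.cosh a) := by
  wlog h : |a| ≤ |b| with H
  · have := H b a (le_of_not_ge h)
    rw [abs_sub_comm, abs_sub_comm (a ^ 2)] at this
    linarith [this]
  have key := abs_aux (abs_nonneg a) h
  rw [Real.cosh_abs, Real.cosh_abs, sq_abs, sq_abs] at key
  exact key
end

section
/- Let n ≥ 1 and p ≥ 1 be integers, let σ ≥ 0, and let ξ₁, …, ξ_p ∈ ℝⁿ satisfy |ξ₁| ≥ |ξ₂| ≥ ⋯ ≥ |ξ_p|, with ξ = Σ_{j=1}^p ξ_j. Then | 1 − cosh(σ|ξ|) · ∏_{j=1}^p sech(σ|ξ_j|) | ≤ p² · 2^p · σ² · |ξ₁| |ξ₂|. -/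
open Finset

private lemma sinh_le_mul_exp {x : ℝ} (hx : 0 ≤ x) : Real.sinh x ≤ x * Real.exp x := by
  have huv : Real.exp x * Real.exp (-x) = 1 := by
    rw [← Real.exp_add]; simp
  have h2 : Real.exp (-x) ^ 2 = Real.exp (-(2*x)) := by
    rw [sq, ← Real.exp_add]; ring_nf
  have h := Real.add_one_le_exp (-(2*x))
  rw [Real.sinh_eq]
  nlinarith [Real.exp_pos x, Real.exp_pos (-x), sq_nonneg (Real.exp x - Real.exp (-x))]

private lemma cosh_le_one_add {x : ℝ} (hx : 0 ≤ x) :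
    Real.cosh x ≤ 1 + x ^ 2 / 2 * Real.exp x := by
  have huv : Real.exp x * Real.exp (-x) = 1 := by
    rw [← Real.exp_add]; simp
  have h1 : 1 - x ≤ Real.exp (-x) := by have := Real.add_one_le_exp (-x); linarith
  have hu1 : 1 ≤ Real.exp x := Real.one_le_exp hx
  have hv1 : Real.exp (-x) ≤ 1 := Real.exp_le_one_iff.2 (by linarith)
  have hkey : Real.exp x - 1 ≤ x * Real.exp x := by nlinarith [Real.exp_pos x]
  rw [Real.cosh_eq]
  nlinarith [Real.exp_pos x, Real.exp_pos (-x), sq_nonneg (Real.exp x - 1),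
    mul_nonneg (mul_nonneg (sub_nonneg.2 hu1) (sub_nonneg.2 hu1)) (Real.exp_pos (-x)).le]

private lemma prod_cosh_le_cosh_sum (m : ℕ) (c : ℕ → ℝ) (hc : ∀ i, 0 ≤ c i) :
    ∏ i ∈ range m, Real.cosh (c i) ≤ Real.cosh (∑ i ∈ range m, c i) := by
  induction m with
  | zero => simp
  | succ k ih =>
    rw [prod_range_succ, sum_range_succ, Real.cosh_add]
    have h1 : 0 ≤ Real.sinh (∑ i ∈ range k, c i) :=
      Real.sinh_nonneg_iff.2 (sum_nonneg fun i _ => hc i)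
    have h2 : 0 ≤ Real.sinh (c k) := Real.sinh_nonneg_iff.2 (hc k)
    nlinarith [Real.cosh_pos (c k), Real.cosh_pos (∑ i ∈ range k, c i),
      Real.one_le_cosh (c k)]

private lemma exp_le_of_sq_le {b : ℝ} (hb : 0 ≤ b) (hb2 : b ^ 2 ≤ 1/2) :
    Real.exp b ≤ 9/4 := by
  have hb34 : b ≤ 3/4 := by nlinarith
  have h1 : Real.exp b ≤ Real.exp (3/4) := Real.exp_le_exp.2 hb34
  have h2 : Real.exp (3/4) ^ 4 = Real.exp 3 := by
    rw [← Real.exp_nat_mul]; norm_num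
  have h3 : Real.exp 3 = Real.exp 1 ^ 3 := by
    rw [← Real.exp_nat_mul]; norm_num
  have h4 := Real.exp_one_lt_d9
  have h5 : Real.exp 3 < 21 := by
    have : Real.exp 1 ^ 3 < 2.7182818286 ^ 3 :=
      pow_lt_pow_left₀ h4 (Real.exp_pos 1).le (by norm_num)
    rw [h3]; nlinarith
  have h6 : Real.exp (3/4) ≤ 9/4 := by
    nlinarith [Real.exp_pos (3/4), sq_nonneg (Real.exp (3/4)), sq_nonneg (Real.exp (3/4) - 9/4),
      sq_nonneg (Real.exp (3/4) + 9/4)]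
  linarith

private lemma exp_le_two_cosh (x : ℝ) : Real.exp x ≤ 2 * Real.cosh x := by
  have h1 := Real.cosh_add_sinh x
  have h2 := Real.cosh_sub_sinh x
  have h3 := Real.exp_pos (-x)
  linarith

set_option maxHeartbeats 1000000 in
private lemma key_real (m : ℕ) (hm : 1 ≤ m) (a0 a1 b s Q : ℝ)
    (ha0 : 0 ≤ a0) (ha1 : 0 ≤ a1) (h10 : a1 ≤ a0)
    (hb0 : 0 ≤ b) (hbm : b ≤ m * a1)
    (hs0 : 0 ≤ s) (hsu : s ≤ a0 + b) (hsl : a0 - b ≤ s)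
    (hQ1 : 1 ≤ Q) (hQb : Q ≤ Real.cosh b) (hQe : Real.exp b ≤ 2 ^ m * Q) :
    |1 - Real.cosh s * (Real.cosh a0 * Q)⁻¹| ≤ ((m : ℝ) + 1) ^ 2 * 2 ^ (m + 1) * a0 * a1 := by
  have hca : (0:ℝ) < Real.cosh a0 := Real.cosh_pos a0
  have hQ0 : (0:ℝ) < Q := lt_of_lt_of_le one_pos hQ1
  have hP : (0:ℝ) < Real.cosh a0 * Q := mul_pos hca hQ0
  have hP1 : (1:ℝ) ≤ Real.cosh a0 * Q := one_le_mul_of_one_le_of_one_le (Real.one_le_cosh a0) hQ1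
  have hm1 : (1:ℝ) ≤ (m:ℝ) := by exact_mod_cast hm
  have h2m : (4:ℝ) ≤ 2 ^ (m + 1) := by
    calc (4:ℝ) = 2 ^ 2 := by norm_num
    _ ≤ 2 ^ (m + 1) := pow_le_pow_right₀ one_le_two (by omega)
  have hcs0 : (0:ℝ) < Real.cosh s := Real.cosh_pos s
  have hdiv_up : ∀ C:ℝ, 0 ≤ C → Real.cosh s ≤ (1+C)*(Real.cosh a0*Q) →
      Real.cosh s/(Real.cosh a0*Q) - 1 ≤ C := by
    intro C hC h
    rw [sub_le_iff_le_add, div_le_iff₀ hP]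
    linarith
  have hdiv_dn : ∀ C:ℝ, (1-C)*(Real.cosh a0*Q) ≤ Real.cosh s →
      1 - Real.cosh s/(Real.cosh a0*Q) ≤ C := by
    intro C h
    have := (le_div_iff₀ hP).2 h
    linarith
  rw [← div_eq_mul_inv, abs_le]
  rcases le_or_gt 1 (2 * ((m:ℝ)+1)^2 * a0 * a1) with hbig | hsmall
  · -- big case: trivial bound 2^m
    have h2mnn : (0:ℝ) ≤ 2^m := by positivity
    have hpow : (2:ℝ)^m ≤ ((m:ℝ)+1)^2 * 2^(m+1) * a0 * a1 := by
      have h1 : ((m:ℝ)+1)^2 * 2^(m+1) * a0 * a1 = 2^m * (2 * ((m:ℝ)+1)^2 * a0 * a1) := by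
        rw [pow_succ]; ring
      have t := mul_le_mul_of_nonneg_left hbig h2mnn
      rw [h1]; linarith
    have h1 : (1:ℝ) ≤ 2^m := one_le_pow₀ one_le_two
    constructor
    · have hcs : Real.cosh s ≤ (2 ^ m + 1/2) * (Real.cosh a0 * Q) := by
        have he1 : Real.exp s ≤ Real.exp (a0 + b) := Real.exp_le_exp.2 hsu
        have he2 : Real.exp (a0 + b) = Real.exp a0 * Real.exp b := Real.exp_add a0 b
        have he4 : Real.exp a0 * Real.exp b ≤ (2 * Real.cosh a0) * (2^m * Q) :=
          mul_le_mul (exp_le_two_cosh a0) hQe (Real.exp_pos b).le (by positivity)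
        have he5 : Real.exp (-s) ≤ 1 := Real.exp_le_one_iff.2 (by linarith)
        rw [Real.cosh_eq]
        linarith
      have := (div_le_iff₀ hP).2 hcs
      linarith
    · have : (0:ℝ) ≤ Real.cosh s / (Real.cosh a0 * Q) := le_of_lt (div_pos hcs0 hP)
      linarith
  · -- small case
    have ha01nn : (0:ℝ) ≤ a0 * a1 := mul_nonneg ha0 ha1
    have ha1sq : a1^2 ≤ a0 * a1 := by
      have t := mul_le_mul_of_nonneg_right h10 ha1
      nlinarith [t]
    have hbsq2 : b^2 ≤ (m:ℝ)^2 * (a0*a1) := by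
      have t1 : b*b ≤ ((m:ℝ)*a1)*((m:ℝ)*a1) := mul_le_mul hbm hbm hb0 (by positivity)
      have t2 : (m:ℝ)^2*a1^2 ≤ (m:ℝ)^2*(a0*a1) := mul_le_mul_of_nonneg_left ha1sq (by positivity)
      nlinarith [t1, t2]
    have hbsq : b^2 ≤ 1/2 := by
      have k1 : (m:ℝ)^2*(a0*a1) ≤ ((m:ℝ)+1)^2*(a0*a1) := by
        have t := mul_nonneg (by positivity : (0:ℝ) ≤ 2*(m:ℝ)+1) ha01nn
        nlinarith [t]
      have k2 : 2*(((m:ℝ)+1)^2*(a0*a1)) < 1 := by linarith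
      linarith
    have hEb : Real.exp b ≤ 9/4 := exp_le_of_sq_le hb0 hbsq
    have hsb : Real.sinh b ≤ 9/4 * b := by
      have t1 := sinh_le_mul_exp hb0
      have t2 : b * Real.exp b ≤ b * (9/4) := mul_le_mul_of_nonneg_left hEb hb0
      linarith
    have hsb0 : (0:ℝ) ≤ Real.sinh b := Real.sinh_nonneg_iff.2 hb0
    have hcb : Real.cosh b ≤ 1 + 9/8 * b^2 := by
      have t1 := cosh_le_one_add hb0
      have t2 : b^2/2 * Real.exp b ≤ b^2/2 * (9/4) :=
        mul_le_mul_of_nonneg_left hEb (by positivity)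
      linarith
    have hsa0 : (0:ℝ) ≤ Real.sinh a0 := Real.sinh_nonneg_iff.2 ha0
    have hsbm : Real.sinh b ≤ 9/4 * ((m:ℝ)*a1) := by linarith
    have hT0 : Real.sinh a0 * Real.sinh b ≤ 49/8 * m * (a0*a1) * Real.cosh a0 := by
      have hmc : (0:ℝ) ≤ (m:ℝ) * (a0*a1) := mul_nonneg (Nat.cast_nonneg m) ha01nn
      rcases le_or_gt a0 1 with h|h
      · have e1 : Real.sinh a0 ≤ a0 * Real.exp a0 := sinh_le_mul_exp ha0
        have e2 : a0 * Real.exp a0 ≤ a0 * Real.exp 1 :=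
          mul_le_mul_of_nonneg_left (Real.exp_le_exp.2 h) ha0
        have e3 : a0 * Real.exp 1 ≤ a0 * 2.72 :=
          mul_le_mul_of_nonneg_left (le_of_lt (lt_trans Real.exp_one_lt_d9 (by norm_num))) ha0
        have e4 : Real.sinh a0 ≤ 2.72 * a0 := by linarith
        have e6 : Real.sinh a0 * Real.sinh b ≤ (2.72*a0) * (9/4*((m:ℝ)*a1)) :=
          mul_le_mul e4 hsbm hsb0 (by positivity)
        have e9 : (0:ℝ) ≤ (m:ℝ) * (a0*a1) * (Real.cosh a0 - 1) :=
          mul_nonneg hmc (by linarith [Real.one_le_cosh a0])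
        linarith [e6, e9, hmc]
      · have e1 : Real.sinh a0 ≤ Real.cosh a0 := by
          have t1 := Real.cosh_sub_sinh a0
          have t2 := Real.exp_pos (-a0)
          linarith
        have e6 : Real.sinh a0 * Real.sinh b ≤ Real.cosh a0 * (9/4*((m:ℝ)*a1)) :=
          mul_le_mul e1 hsbm hsb0 hca.le
        have e7 : a1 ≤ a0 * a1 := by nlinarith
        have e8 : (9/4*(m:ℝ)*Real.cosh a0) * a1 ≤ (9/4*(m:ℝ)*Real.cosh a0) * (a0*a1) :=
          mul_le_mul_of_nonneg_left e7 (by positivity)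
        have e9 : (0:ℝ) ≤ (m:ℝ) * (a0*a1) * Real.cosh a0 := mul_nonneg hmc hca.le
        linarith [e6, e8, e9]
    have hT0' : Real.sinh a0 * Real.sinh b ≤ 49/8 * m * (a0*a1) * (Real.cosh a0 * Q) := by
      have t : (0:ℝ) ≤ (49/8*(m:ℝ)*(a0*a1)*Real.cosh a0) * (Q - 1) :=
        mul_nonneg (by positivity) (by linarith)
      linarith [t, hT0]
    -- upper estimate on cosh s / P - 1
    have hC1nn : (0:ℝ) ≤ 9/8*(m:ℝ)^2*(a0*a1) + 49/8*(m:ℝ)*(a0*a1) := by positivity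
    have hupper : Real.cosh s/(Real.cosh a0*Q) - 1 ≤ 9/8*(m:ℝ)^2*(a0*a1) + 49/8*(m:ℝ)*(a0*a1) := by
      apply hdiv_up _ hC1nn
      have h1 : Real.cosh s ≤ Real.cosh (a0+b) := by
        apply Real.cosh_le_cosh.2
        rw [abs_of_nonneg hs0, abs_of_nonneg (by linarith : (0:ℝ) ≤ a0 + b)]
        exact hsu
      rw [Real.cosh_add] at h1
      have h2 : Real.cosh a0 * Real.cosh b ≤ Real.cosh a0 * (1 + 9/8*b^2) :=
        mul_le_mul_of_nonneg_left hcb hca.le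
      have h3 : Real.cosh a0 * (9/8*b^2) ≤ Real.cosh a0 * (9/8*((m:ℝ)^2*(a0*a1))) :=
        mul_le_mul_of_nonneg_left (by linarith) hca.le
      have h4 : (0:ℝ) ≤ (1 + 9/8*(m:ℝ)^2*(a0*a1)) * Real.cosh a0 * (Q - 1) :=
        mul_nonneg (mul_nonneg (by positivity) hca.le) (by linarith)
      linarith [h1, h2, h3, h4, hT0']
    have harith1 : 9/8*(m:ℝ)^2 + 49/8*(m:ℝ) ≤ ((m:ℝ)+1)^2*2^(m+1) := by
      have t : ((m:ℝ)+1)^2 * 4 ≤ ((m:ℝ)+1)^2 * 2^(m+1) :=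
        mul_le_mul_of_nonneg_left h2m (sq_nonneg ((m:ℝ)+1))
      linarith [t, sq_nonneg (m:ℝ)]
    have hRHS : 9/8*(m:ℝ)^2*(a0*a1) + 49/8*(m:ℝ)*(a0*a1) ≤ ((m:ℝ)+1)^2*2^(m+1)*a0*a1 := by
      have t := mul_le_mul_of_nonneg_right harith1 ha01nn
      linarith [t]
    constructor
    · -- left side of abs: X - 1 ≤ RHS
      linarith [hupper, hRHS, hC1nn]
    · -- right side: 1 - X ≤ RHS
      rcases le_or_gt b a0 with hba | hab
      · have hdn : 1 - Real.cosh s/(Real.cosh a0*Q) ≤ 49/8*(m:ℝ)*(a0*a1) := by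
          apply hdiv_dn
          have h1 : Real.cosh (a0-b) ≤ Real.cosh s := by
            apply Real.cosh_le_cosh.2
            rw [abs_of_nonneg (by linarith : (0:ℝ) ≤ a0 - b), abs_of_nonneg hs0]
            exact hsl
          rw [Real.cosh_sub] at h1
          have h2 : Real.cosh a0 * Q ≤ Real.cosh a0 * Real.cosh b :=
            mul_le_mul_of_nonneg_left hQb hca.le
          linarith
        have hm2nn : (0:ℝ) ≤ 9/8*(m:ℝ)^2*(a0*a1) := by positivity
        linarith [hdn, hRHS, hm2nn]
      · -- a0 < b
        have hCnn : (0:ℝ) ≤ 81/8*(m:ℝ)^2*(a0*a1) := by positivity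
        have hPle : Real.cosh a0 * Q ≤ 1 + 81/8*b^2 := by
          have m1 : Real.cosh a0 * Q ≤ Real.cosh a0 * Real.cosh b :=
            mul_le_mul_of_nonneg_left hQb hca.le
          have m2 : Real.cosh a0 * Real.cosh b ≤ Real.cosh (a0+b) := by
            rw [Real.cosh_add]
            linarith [mul_nonneg hsa0 hsb0]
          have m3 : Real.cosh (a0+b) ≤ Real.cosh (2*b) := by
            apply Real.cosh_le_cosh.2
            rw [abs_of_nonneg (by linarith : (0:ℝ) ≤ a0+b), abs_of_nonneg (by linarith : (0:ℝ) ≤ 2*b)]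
            linarith
          have m4 : Real.cosh (2*b) ≤ 1 + (2*b)^2/2 * Real.exp (2*b) :=
            cosh_le_one_add (by linarith)
          have m5 : Real.exp (2*b) = Real.exp b * Real.exp b := by
            rw [← Real.exp_add]; ring_nf
          have m6 : Real.exp (2*b) ≤ 81/16 := by
            rw [m5]
            have := mul_le_mul hEb hEb (Real.exp_pos b).le (by norm_num : (0:ℝ) ≤ 9/4)
            linarith
          have m7 : 2*b^2 * Real.exp (2*b) ≤ 2*b^2 * (81/16) :=
            mul_le_mul_of_nonneg_left m6 (by positivity)
          linarith [m1, m2, m3, m4, m7]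
        have hdn : 1 - Real.cosh s/(Real.cosh a0*Q) ≤ 81/8*(m:ℝ)^2*(a0*a1) := by
          apply hdiv_dn
          have h1 : (1:ℝ) ≤ Real.cosh s := Real.one_le_cosh s
          have h2 : 81/8*b^2 ≤ 81/8*(m:ℝ)^2*(a0*a1) := by linarith
          have t1 : (0:ℝ) ≤ (81/8*(m:ℝ)^2*(a0*a1)) * (Real.cosh a0 * Q - 1) :=
            mul_nonneg hCnn (by linarith)
          linarith [t1, hPle, h2, h1]
        have harith2 : (81/8:ℝ)*(m:ℝ)^2 ≤ ((m:ℝ)+1)^2*2^(m+1) := by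
          rcases Nat.lt_or_ge m 3 with h|h
          · interval_cases m <;> norm_num
          · have h16 : (16:ℝ) ≤ 2^(m+1) := by
              calc (16:ℝ) = 2^4 := by norm_num
              _ ≤ 2^(m+1) := pow_le_pow_right₀ one_le_two (by omega)
            have t : ((m:ℝ)+1)^2 * 16 ≤ ((m:ℝ)+1)^2 * 2^(m+1) :=
              mul_le_mul_of_nonneg_left h16 (sq_nonneg ((m:ℝ)+1))
            linarith [t, sq_nonneg (m:ℝ), hm1]
        have hfin : 81/8*(m:ℝ)^2*(a0*a1) ≤ ((m:ℝ)+1)^2*2^(m+1)*a0*a1 := by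
          have t := mul_le_mul_of_nonneg_right harith2 ha01nn
          linarith [t]
        linarith [hdn, hfin]

/-- Estimate (coshpest1): if `|ξ₁| ≥ |ξ₂| ≥ ⋯ ≥ |ξ_p|` and `ξ = Σ_{j=1}^p ξ_j`, then
`|1 − cosh(σ|ξ|) ∏_{j=1}^p sech(σ|ξ_j|)| ≤ p² 2^p σ² |ξ₁||ξ₂|`, where `sech r = (cosh r)⁻¹`.
Here the vectors `ξ₁, …, ξ_p` are `ξ 0, …, ξ (p-1)` for a sequence `ξ : ℕ → ℝⁿ`. -/
theorem one_sub_cosh_prod_sech_le_sigma_sq (n p : ℕ) (hn : 1 ≤ n) (hp : 1 ≤ p)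
    (σ : ℝ) (hσ : 0 ≤ σ) (ξ : ℕ → EuclideanSpace ℝ (Fin n))
    (hord : ∀ j k, j ≤ k → k < p → ‖ξ k‖ ≤ ‖ξ j‖) :
    |1 - Real.cosh (σ * ‖∑ j ∈ Finset.range p, ξ j‖) *
        ∏ j ∈ Finset.range p, (Real.cosh (σ * ‖ξ j‖))⁻¹|
      ≤ (p : ℝ) ^ 2 * 2 ^ p * σ ^ 2 * ‖ξ 0‖ * ‖ξ 1‖ := by
  by_cases hp1 : p = 1
  · subst hp1
    simp only [Finset.range_one, Finset.sum_singleton, Finset.prod_singleton]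
    rw [mul_inv_cancel₀ (ne_of_gt (Real.cosh_pos _)), sub_self, abs_zero]
    positivity
  · obtain ⟨m, hm1, rfl⟩ : ∃ m, 1 ≤ m ∧ p = m + 1 := ⟨p - 1, by omega, by omega⟩
    set a0 := σ * ‖ξ 0‖ with ha0def
    set a1 := σ * ‖ξ 1‖ with ha1def
    set c : ℕ → ℝ := fun i => σ * ‖ξ (i + 1)‖ with hcdef
    set b := ∑ i ∈ Finset.range m, c i with hbdef
    set Q := ∏ i ∈ Finset.range m, Real.cosh (c i) with hQdef
    have hc0 : ∀ i, 0 ≤ c i := fun i => by positivity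
    have hsum := Finset.sum_range_succ' ξ m
    have hb' : b = σ * ∑ i ∈ Finset.range m, ‖ξ (i + 1)‖ := by
      rw [Finset.mul_sum]
    have hTnorm : ‖∑ i ∈ Finset.range m, ξ (i + 1)‖ ≤ ∑ i ∈ Finset.range m, ‖ξ (i + 1)‖ :=
      norm_sum_le _ _
    have ha0 : 0 ≤ a0 := by positivity
    have ha1 : 0 ≤ a1 := by positivity
    have h10 : a1 ≤ a0 :=
      mul_le_mul_of_nonneg_left (hord 0 1 (by omega) (by omega)) hσ
    have hb0 : 0 ≤ b := Finset.sum_nonneg fun i _ => hc0 i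
    have hbm : b ≤ m * a1 := by
      have h1 : b ≤ ∑ _i ∈ Finset.range m, a1 := by
        apply Finset.sum_le_sum
        intro i hi
        exact mul_le_mul_of_nonneg_left
          (hord 1 (i + 1) (by omega) (by simp at hi; omega)) hσ
      simpa using h1
    have hs0 : 0 ≤ σ * ‖∑ j ∈ Finset.range (m + 1), ξ j‖ := by positivity
    have hsu : σ * ‖∑ j ∈ Finset.range (m + 1), ξ j‖ ≤ a0 + b := by
      have h1 : ‖∑ j ∈ Finset.range (m + 1), ξ j‖ ≤
          ‖ξ 0‖ + ∑ i ∈ Finset.range m, ‖ξ (i + 1)‖ := by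
        rw [hsum]
        calc ‖(∑ i ∈ Finset.range m, ξ (i + 1)) + ξ 0‖
            ≤ ‖∑ i ∈ Finset.range m, ξ (i + 1)‖ + ‖ξ 0‖ := norm_add_le _ _
          _ ≤ _ := by linarith
      have := mul_le_mul_of_nonneg_left h1 hσ
      rw [hb', ha0def]; linarith [this]
    have hsl : a0 - b ≤ σ * ‖∑ j ∈ Finset.range (m + 1), ξ j‖ := by
      have h1 : ‖ξ 0‖ ≤ ‖∑ j ∈ Finset.range (m + 1), ξ j‖ +
          ∑ i ∈ Finset.range m, ‖ξ (i + 1)‖ := by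
        have h2 : ξ 0 = (∑ j ∈ Finset.range (m + 1), ξ j) -
            ∑ i ∈ Finset.range m, ξ (i + 1) := by
          rw [hsum]; abel
        calc ‖ξ 0‖ = ‖(∑ j ∈ Finset.range (m + 1), ξ j) -
              ∑ i ∈ Finset.range m, ξ (i + 1)‖ := by rw [← h2]
          _ ≤ ‖∑ j ∈ Finset.range (m + 1), ξ j‖ +
              ‖∑ i ∈ Finset.range m, ξ (i + 1)‖ := norm_sub_le _ _
          _ ≤ _ := by linarith
      have := mul_le_mul_of_nonneg_left h1 hσ
      rw [hb', ha0def]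
      rw [mul_add] at this
      linarith [this]
    have hQ1 : 1 ≤ Q := by
      rw [hQdef]
      calc (1:ℝ) = ∏ _i ∈ Finset.range m, 1 := by simp
        _ ≤ _ := Finset.prod_le_prod (by simp) (fun i _ => Real.one_le_cosh _)
    have hQb : Q ≤ Real.cosh b := prod_cosh_le_cosh_sum m c hc0
    have hQe : Real.exp b ≤ 2 ^ m * Q := by
      rw [hbdef, Real.exp_sum]
      calc ∏ i ∈ Finset.range m, Real.exp (c i)
          ≤ ∏ i ∈ Finset.range m, (2 * Real.cosh (c i)) :=
            Finset.prod_le_prod (fun i _ => (Real.exp_pos _).le)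
              (fun i _ => exp_le_two_cosh _)
        _ = 2 ^ m * Q := by
            rw [Finset.prod_mul_distrib, Finset.prod_const, Finset.card_range]
    have hprod : (∏ j ∈ Finset.range (m + 1), (Real.cosh (σ * ‖ξ j‖))⁻¹) =
        (Real.cosh a0 * Q)⁻¹ := by
      rw [Finset.prod_inv_distrib]
      congr 1
      rw [Finset.prod_range_succ' (fun j => Real.cosh (σ * ‖ξ j‖)) m, mul_comm]
    rw [hprod]
    have hkey := key_real m hm1 a0 a1 b (σ * ‖∑ j ∈ Finset.range (m + 1), ξ j‖) Q
      ha0 ha1 h10 hb0 hbm hs0 hsu hsl hQ1 hQb hQe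
    have heq : ((m : ℝ) + 1) ^ 2 * 2 ^ (m + 1) * a0 * a1 =
        ((m + 1 : ℕ) : ℝ) ^ 2 * 2 ^ (m + 1) * σ ^ 2 * ‖ξ 0‖ * ‖ξ 1‖ := by
      push_cast
      rw [ha0def, ha1def]
      ring
    rw [heq] at hkey
    exact hkey
end

section
/- Let n ≥ 1 and p ≥ 1 be integers, let σ ≥ 0, and let U be a complex-valued Schwartz function on ℝⁿ with Û = 𝓕U. Let W be the inverse Fourier transform of ξ ↦ e^{−σ|ξ|} Û(ξ). Then, as values in [0, ∞], ‖ ξ ↦ e^{σ|ξ|} · 𝓕(W^p)(ξ) ‖_{L²(ℝⁿ)} ≤ ‖ |Û| ∗ |Û| ∗ ⋯ ∗ |Û| ‖_{L²(ℝⁿ)}, where the right-hand side is the L² norm of the p-fold convolution of the function ξ ↦ |Û(ξ)| with itself. -/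
open MeasureTheory

/-- The `p`-fold self-convolution of `f : ℝⁿ → ℝ`: `iteratedSelfConv f k` is the
`(k+1)`-fold convolution `f ⋆ f ⋆ ⋯ ⋆ f` (so `k = p − 1` gives the `p`-fold one). -/
noncomputable def iteratedSelfConv {n : ℕ} (f : EuclideanSpace ℝ (Fin n) → ℝ) :
    ℕ → EuclideanSpace ℝ (Fin n) → ℝ
  | 0 => f
  | k + 1 => MeasureTheory.convolution f (iteratedSelfConv f k)
      (ContinuousLinearMap.mul ℝ ℝ) volume

section Aux

open Real Complex
open scoped FourierTransform Convolution RealInnerProductSpace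

noncomputable def iterConvC {n : ℕ} (f : EuclideanSpace ℝ (Fin n) → ℂ) :
    ℕ → EuclideanSpace ℝ (Fin n) → ℂ
  | 0 => f
  | k + 1 => MeasureTheory.convolution f (iterConvC f k)
      (ContinuousLinearMap.mul ℂ ℂ) volume

lemma fourierInv_conv {n : ℕ} {F H : EuclideanSpace ℝ (Fin n) → ℂ}
    (hF : Integrable F volume) (hH : Integrable H volume)
    (x : EuclideanSpace ℝ (Fin n)) :
    𝓕⁻ (F ⋆[ContinuousLinearMap.mul ℂ ℂ, volume] H) x = 𝓕⁻ F x * 𝓕⁻ H x := by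
  set c : EuclideanSpace ℝ (Fin n) → ℂ :=
    fun v => Complex.exp ((2 * π * ⟪v, x⟫ : ℝ) * Complex.I) with hc
  have hc1 : ∀ v, ‖c v‖ = 1 := by
    intro v
    rw [hc]
    exact Complex.norm_exp_ofReal_mul_I _
  have hcadd : ∀ a b, c (a + b) = c a * c b := by
    intro a b
    have h2 : (2 * π * ⟪a + b, x⟫ : ℝ) = 2 * π * ⟪a, x⟫ + 2 * π * ⟪b, x⟫ := by
      rw [inner_add_left]; ring
    simp only [hc, h2, ← Complex.exp_add]
    congr 1
    push_cast
    ring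
  have hccont : Continuous c := by
    rw [hc]
    apply Complex.continuous_exp.comp
    exact (Complex.continuous_ofReal.comp
      ((continuous_const.mul ((continuous_id.inner continuous_const))))).mul continuous_const
  have h0 := hF.convolution_integrand (ContinuousLinearMap.mul ℂ ℂ) hH
  have key : Integrable (Function.uncurry fun ξ y => c ξ * (F y * H (ξ - y)))
      (volume.prod volume) := by
    refine h0.norm.mono' ?_ ?_
    · exact (hccont.comp continuous_fst).aestronglyMeasurable.mul h0.aestronglyMeasurable
    · filter_upwards with p
      simp only [Function.uncurry, norm_mul, hc1, one_mul, ContinuousLinearMap.mul_apply']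
      exact le_refl _
  have base : ∀ (G : EuclideanSpace ℝ (Fin n) → ℂ), 𝓕⁻ G x = ∫ v, c v * G v := by
    intro G
    simp only [hc]
    rw [Real.fourierInv_eq']
    simp_rw [smul_eq_mul]
  rw [base, base, base]
  calc ∫ ξ, c ξ * (F ⋆[ContinuousLinearMap.mul ℂ ℂ, volume] H) ξ
      = ∫ ξ, ∫ y, c ξ * (F y * H (ξ - y)) := by
        simp_rw [convolution_def, ContinuousLinearMap.mul_apply', ← integral_const_mul]
    _ = ∫ y, ∫ ξ, c ξ * (F y * H (ξ - y)) := integral_integral_swap key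
    _ = ∫ y, (c y * F y) * ∫ ξ, c ξ * H ξ := by
        congr 1; ext y
        have e1 : ∀ ξ, c ξ * (F y * H (ξ - y)) = F y * (c ξ * H (ξ - y)) := fun ξ => by ring
        simp_rw [e1, integral_const_mul]
        have e2 : ∫ ξ, c ξ * H (ξ - y) = ∫ z, c (z + y) * H z := by
          rw [← integral_add_right_eq_self (fun ξ => c ξ * H (ξ - y)) y]
          simp
        rw [e2]
        simp_rw [hcadd, mul_comm (c _) (c y), mul_assoc, integral_const_mul]
        ring
    _ = (∫ y, c y * F y) * ∫ ξ, c ξ * H ξ := integral_mul_const _ _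

lemma iter_props {n : ℕ} {σ : ℝ} (hσ : 0 ≤ σ) (u : EuclideanSpace ℝ (Fin n) → ℂ)
    (hui : Integrable u volume) (huc : Continuous u) {C : ℝ}
    (hub : ∀ x, ‖u x‖ ≤ C) (k : ℕ) :
    (Integrable (iteratedSelfConv (fun ξ => ‖u ξ‖) k) volume
      ∧ Continuous (iteratedSelfConv (fun ξ => ‖u ξ‖) k)
      ∧ (∀ x, 0 ≤ iteratedSelfConv (fun ξ => ‖u ξ‖) k x)
      ∧ (∃ D, ∀ x, iteratedSelfConv (fun ξ => ‖u ξ‖) k x ≤ D))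
    ∧ (Integrable (iterConvC (fun ξ => ((Real.exp (-(σ * ‖ξ‖)) : ℝ) : ℂ) * u ξ) k) volume
      ∧ Continuous (iterConvC (fun ξ => ((Real.exp (-(σ * ‖ξ‖)) : ℝ) : ℂ) * u ξ) k)
      ∧ ∀ ξ, ‖iterConvC (fun ξ => ((Real.exp (-(σ * ‖ξ‖)) : ℝ) : ℂ) * u ξ) k ξ‖
          ≤ Real.exp (-(σ * ‖ξ‖)) * iteratedSelfConv (fun ξ => ‖u ξ‖) k ξ) := by
  set h : EuclideanSpace ℝ (Fin n) → ℝ := fun ξ => ‖u ξ‖ with hh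
  set g : EuclideanSpace ℝ (Fin n) → ℂ :=
    fun ξ => ((Real.exp (-(σ * ‖ξ‖)) : ℝ) : ℂ) * u ξ with hg
  have hhi : Integrable h volume := hui.norm
  have hhc : Continuous h := huc.norm
  have hhnn : ∀ x, 0 ≤ h x := fun x => norm_nonneg _
  have hhb : ∀ x, h x ≤ C := hub
  have hgb : ∀ ξ, ‖g ξ‖ = Real.exp (-(σ * ‖ξ‖)) * h ξ := by
    intro ξ
    rw [hg, hh, norm_mul, Complex.norm_real, Real.norm_eq_abs,
      abs_of_pos (Real.exp_pos _)]
  have hexp1 : ∀ ξ : EuclideanSpace ℝ (Fin n), Real.exp (-(σ * ‖ξ‖)) ≤ 1 := by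
    intro ξ
    rw [Real.exp_le_one_iff]
    have := mul_nonneg hσ (norm_nonneg ξ)
    linarith
  have hgc : Continuous g := by
    rw [hg]
    exact (Complex.continuous_ofReal.comp
      (Real.continuous_exp.comp ((continuous_const.mul continuous_norm).neg))).mul huc
  have hgi : Integrable g volume := by
    refine hui.mono hgc.aestronglyMeasurable ?_
    filter_upwards with ξ
    rw [hgb ξ]
    calc Real.exp (-(σ * ‖ξ‖)) * h ξ ≤ 1 * h ξ :=
          mul_le_mul_of_nonneg_right (hexp1 ξ) (hhnn ξ)
      _ = ‖u ξ‖ := by rw [one_mul]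
  induction k with
  | zero =>
    refine ⟨⟨hhi, hhc, hhnn, ⟨C, hhb⟩⟩, hgi, hgc, ?_⟩
    intro ξ
    rw [show iterConvC g 0 = g from rfl, show iteratedSelfConv h 0 = h from rfl, hgb ξ]
  | succ k ih =>
    obtain ⟨⟨hHi, hHc, hHnn, ⟨D, hHb⟩⟩, hGi, hGc, hGle⟩ := ih
    set Hk := iteratedSelfConv h k
    set Gk := iterConvC g k
    have hHk1 : iteratedSelfConv h (k + 1)
        = h ⋆[ContinuousLinearMap.mul ℝ ℝ, volume] Hk := rfl
    have hGk1 : iterConvC g (k + 1)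
        = g ⋆[ContinuousLinearMap.mul ℂ ℂ, volume] Gk := rfl
    have hD0 : 0 ≤ D := le_trans (hHnn 0) (hHb 0)
    have hHbdd : BddAbove (Set.range fun x => ‖Hk x‖) := by
      refine ⟨D, ?_⟩
      rintro r ⟨x, rfl⟩
      show ‖Hk x‖ ≤ D
      rw [Real.norm_eq_abs, _root_.abs_of_nonneg (hHnn x)]
      exact hHb x
    have hHmeas : AEStronglyMeasurable Hk volume := hHc.aestronglyMeasurable
    -- integrability at each point of the dominating convolution integrand
    have hdom : ∀ ξ, Integrable (fun y => h y * Hk (ξ - y)) volume := by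
      intro ξ
      have : Integrable (fun y => Hk (ξ - y) * h y) volume := by
        refine Integrable.bdd_mul (c := D) hhi ?_ (Filter.Eventually.of_forall ?_)
        · exact (hHc.comp (continuous_const.sub continuous_id)).aestronglyMeasurable
        · intro x
          show ‖Hk (ξ - x)‖ ≤ D
          rw [Real.norm_eq_abs, _root_.abs_of_nonneg (hHnn _)]
          exact hHb _
      simpa [mul_comm] using this
    have hHi1 : Integrable (iteratedSelfConv h (k + 1)) volume := by
      rw [hHk1]; exact hhi.integrable_convolution _ hHi
    have hHnn1 : ∀ x, 0 ≤ iteratedSelfConv h (k + 1) x := by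
      intro x
      rw [hHk1, convolution_def]
      refine integral_nonneg fun y => ?_
      exact mul_nonneg (hhnn y) (hHnn (x - y))
    have hHb1 : ∀ x, iteratedSelfConv h (k + 1) x ≤ D * ∫ y, h y := by
      intro x
      rw [hHk1, convolution_def]
      calc ∫ y, (ContinuousLinearMap.mul ℝ ℝ) (h y) (Hk (x - y))
          ≤ ∫ y, D * h y := by
            refine integral_mono_of_nonneg ?_ (hhi.const_mul D) ?_
            · filter_upwards with y
              exact mul_nonneg (hhnn y) (hHnn (x - y))
            · filter_upwards with y
              simp only [ContinuousLinearMap.mul_apply']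
              calc h y * Hk (x - y) ≤ h y * D :=
                    mul_le_mul_of_nonneg_left (hHb _) (hhnn y)
                _ = D * h y := mul_comm _ _
        _ = D * ∫ y, h y := integral_const_mul _ _
    have hGi1 : Integrable (iterConvC g (k + 1)) volume := by
      rw [hGk1]; exact hgi.integrable_convolution _ hGi
    have hGbdd : BddAbove (Set.range fun x => ‖Gk x‖) := by
      refine ⟨D, ?_⟩
      rintro r ⟨x, rfl⟩
      calc ‖Gk x‖ ≤ Real.exp (-(σ * ‖x‖)) * Hk x := hGle x
        _ ≤ 1 * D := by
            refine mul_le_mul (hexp1 x) (hHb x) (hHnn x) zero_le_one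
        _ = D := one_mul D
    have hGc1 : Continuous (iterConvC g (k + 1)) := by
      rw [hGk1]
      exact hGbdd.continuous_convolution_right_of_integrable _ hgi hGc
    have hHc1 : Continuous (iteratedSelfConv h (k + 1)) := by
      rw [hHk1]
      exact hHbdd.continuous_convolution_right_of_integrable _ hhi hHc
    have hGle1 : ∀ ξ, ‖iterConvC g (k + 1) ξ‖
        ≤ Real.exp (-(σ * ‖ξ‖)) * iteratedSelfConv h (k + 1) ξ := by
      intro ξ
      rw [hGk1, hHk1, convolution_def, convolution_def]
      calc ‖∫ y, (ContinuousLinearMap.mul ℂ ℂ) (g y) (Gk (ξ - y))‖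
          ≤ ∫ y, ‖g y * Gk (ξ - y)‖ := norm_integral_le_integral_norm _
        _ ≤ ∫ y, Real.exp (-(σ * ‖ξ‖)) * (h y * Hk (ξ - y)) := by
            refine integral_mono_of_nonneg ?_ ((hdom ξ).const_mul _) ?_
            · filter_upwards with y; exact norm_nonneg _
            · filter_upwards with y
              rw [norm_mul, hgb y]
              calc Real.exp (-(σ * ‖y‖)) * h y * ‖Gk (ξ - y)‖
                  ≤ Real.exp (-(σ * ‖y‖)) * h y
                      * (Real.exp (-(σ * ‖ξ - y‖)) * Hk (ξ - y)) := by
                    refine mul_le_mul_of_nonneg_left (hGle _) ?_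
                    exact mul_nonneg (Real.exp_pos _).le (hhnn y)
                _ = (Real.exp (-(σ * ‖y‖)) * Real.exp (-(σ * ‖ξ - y‖)))
                      * (h y * Hk (ξ - y)) := by ring
                _ ≤ Real.exp (-(σ * ‖ξ‖)) * (h y * Hk (ξ - y)) := by
                    refine mul_le_mul_of_nonneg_right ?_
                      (mul_nonneg (hhnn y) (hHnn _))
                    rw [← Real.exp_add]
                    refine Real.exp_le_exp.2 ?_
                    have htri : ‖ξ‖ ≤ ‖y‖ + ‖ξ - y‖ := by
                      have hye : y + (ξ - y) = ξ := by abel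
                      calc ‖ξ‖ = ‖y + (ξ - y)‖ := by rw [hye]
                      _ ≤ ‖y‖ + ‖ξ - y‖ := norm_add_le _ _
                    nlinarith [mul_le_mul_of_nonneg_left htri hσ]
        _ = Real.exp (-(σ * ‖ξ‖)) * ∫ y, h y * Hk (ξ - y) := integral_const_mul _ _
        _ = Real.exp (-(σ * ‖ξ‖)) * ∫ y, (ContinuousLinearMap.mul ℝ ℝ) (h y) (Hk (ξ - y)) := rfl
    exact ⟨⟨hHi1, hHc1, hHnn1, ⟨D * ∫ y, h y, hHb1⟩⟩, hGi1, hGc1, hGle1⟩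

end Aux

section Main

open Real Complex
open scoped FourierTransform Convolution RealInnerProductSpace

/-- The central step (NonlinearEst1): with `W = 𝓕⁻¹(e^{−σ|ξ|} Û)`, the weighted norm
`‖e^{σ|·|} 𝓕(W^p)‖_{L²}` is dominated by the `L²` norm of the `p`-fold convolution
`|Û| ∗ ⋯ ∗ |Û|`, both sides taken as values in `[0,∞]`. -/
theorem weighted_power_le_iterated_conv (n : ℕ) (hn : 1 ≤ n) (p : ℕ) (hp : 1 ≤ p)
    (σ : ℝ) (hσ : 0 ≤ σ) (U : SchwartzMap (EuclideanSpace ℝ (Fin n)) ℂ)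
    (W : EuclideanSpace ℝ (Fin n) → ℂ)
    (hW : W = FourierTransformInv.fourierInv
        (fun ξ => ((Real.exp (-(σ * ‖ξ‖)) : ℝ) : ℂ) *
          FourierTransform.fourier (fun x => U x) ξ)) :
    eLpNorm (fun ξ => ((Real.exp (σ * ‖ξ‖) : ℝ) : ℂ) *
        FourierTransform.fourier (fun x => (W x) ^ p) ξ) 2 volume
      ≤ eLpNorm
          (iteratedSelfConv (fun ξ => ‖FourierTransform.fourier (fun x => U x) ξ‖) (p - 1))
          2 volume := by
  classical
  set u : EuclideanSpace ℝ (Fin n) → ℂ := FourierTransform.fourier (fun x => U x) with hu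
  set g : EuclideanSpace ℝ (Fin n) → ℂ :=
    fun ξ => ((Real.exp (-(σ * ‖ξ‖)) : ℝ) : ℂ) * u ξ with hgdef
  have huU : u = ⇑(SchwartzMap.fourierTransformCLM ℂ U) := by
    rw [hu, SchwartzMap.fourierTransformCLM_apply, SchwartzMap.fourier_coe]
  have hui : Integrable u volume := by
    rw [huU]; exact (SchwartzMap.fourierTransformCLM ℂ U).integrable
  have huc : Continuous u := by
    rw [huU]; exact (SchwartzMap.fourierTransformCLM ℂ U).continuous
  obtain ⟨C, hub⟩ : ∃ C, ∀ x, ‖u x‖ ≤ C := by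
    obtain ⟨C, hC⟩ := (SchwartzMap.fourierTransformCLM ℂ U).decay' 0 0
    refine ⟨C, fun x => ?_⟩
    have := hC x
    rw [huU]
    have h2 : ‖(SchwartzMap.fourierTransformCLM ℂ U).toFun x‖ ≤ C := by
      simpa [norm_iteratedFDeriv_zero] using this
    exact h2
  have props : ∀ k,
      (Integrable (iteratedSelfConv (fun ξ => ‖u ξ‖) k) volume
        ∧ Continuous (iteratedSelfConv (fun ξ => ‖u ξ‖) k)
        ∧ (∀ x, 0 ≤ iteratedSelfConv (fun ξ => ‖u ξ‖) k x)
        ∧ (∃ D, ∀ x, iteratedSelfConv (fun ξ => ‖u ξ‖) k x ≤ D))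
      ∧ (Integrable (iterConvC g k) volume
        ∧ Continuous (iterConvC g k)
        ∧ ∀ ξ, ‖iterConvC g k ξ‖
            ≤ Real.exp (-(σ * ‖ξ‖)) * iteratedSelfConv (fun ξ => ‖u ξ‖) k ξ) := by
    intro k
    have := iter_props hσ u hui huc hub k
    rwa [← hgdef] at this
  have hgi : Integrable g volume := (props 0).2.1
  have hWdef : W = 𝓕⁻ g := hW
  have hWpow : ∀ k, (fun x => W x ^ (k + 1)) = 𝓕⁻ (iterConvC g k) := by
    intro k
    induction k with
    | zero =>
      funext x
      rw [show iterConvC g 0 = g from rfl, hWdef, pow_one]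
    | succ k ih =>
      funext x
      rw [show iterConvC g (k + 1)
          = g ⋆[ContinuousLinearMap.mul ℂ ℂ, volume] iterConvC g k from rfl]
      calc W x ^ (k + 1 + 1) = W x * W x ^ (k + 1) := by ring
        _ = 𝓕⁻ g x * 𝓕⁻ (iterConvC g k) x := by
            rw [congrFun ih x, hWdef]
        _ = 𝓕⁻ (g ⋆[ContinuousLinearMap.mul ℂ ℂ, volume] iterConvC g k) x :=
            (fourierInv_conv hgi (props k).2.1 x).symm
  obtain ⟨m, rfl⟩ : ∃ m, p = m + 1 := ⟨p - 1, (Nat.succ_pred_eq_of_pos hp).symm⟩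
  rw [show m + 1 - 1 = m from rfl]
  by_cases hint : Integrable (fun x => W x ^ (m + 1)) volume
  · have h1 : FourierTransform.fourier (fun x => W x ^ (m + 1)) = iterConvC g m := by
      rw [hWpow m]
      refine Continuous.fourier_fourierInv_eq (props m).2.2.1 (props m).2.1 ?_
      have hng : 𝓕 (iterConvC g m) = fun w => (𝓕⁻ (iterConvC g m)) (-w) := by
        funext w
        rw [Real.fourierInv_eq_fourier_neg, neg_neg]
      rw [hng, ← hWpow m]
      exact hint.comp_neg
    rw [h1]
    refine eLpNorm_mono fun ξ => ?_
    have hGle := (props m).2.2.2 ξ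
    have hHnn := (props m).1.2.2.1 ξ
    rw [norm_mul, Complex.norm_real, Real.norm_eq_abs, abs_of_pos (Real.exp_pos _)]
    calc Real.exp (σ * ‖ξ‖) * ‖iterConvC g m ξ‖
        ≤ Real.exp (σ * ‖ξ‖) * (Real.exp (-(σ * ‖ξ‖))
            * iteratedSelfConv (fun ξ => ‖u ξ‖) m ξ) :=
          mul_le_mul_of_nonneg_left hGle (Real.exp_pos _).le
      _ = iteratedSelfConv (fun ξ => ‖u ξ‖) m ξ := by
          rw [← mul_assoc, ← Real.exp_add]
          simp
      _ ≤ ‖iteratedSelfConv (fun ξ => ‖u ξ‖) m ξ‖ := le_abs_self _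
  · have hzero : (fun ξ => ((Real.exp (σ * ‖ξ‖) : ℝ) : ℂ) *
        FourierTransform.fourier (fun x => W x ^ (m + 1)) ξ)
        = fun _ => (0 : ℂ) := by
      funext ξ
      have hni : ¬ Integrable
          (fun v => Real.fourierChar (-⟪v, ξ⟫) • (W v ^ (m + 1))) volume := by
        rw [Real.fourierIntegral_convergent_iff]
        exact hint
      rw [Real.fourier_eq, integral_undef hni, mul_zero]
    rw [hzero, eLpNorm_zero']
    exact zero_le

end Main
end
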